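/- (Fundamental theorem of space curves, existence) Given a differentiable function κ(s) > 0 and a continuous function τ(s) on (a,b), there exists an open subinterval J and a regular curve α : J → ℝ³ parametrized by arc length whose curvature is κ(s) and whose torsion is τ(s). -/

import Mathlib

open Real
open scoped RealInnerProductSpace

/-- Cross product on `ℝ³` (Euclidean space). -/
noncomputable def cross3 (u v : EuclideanSpace ℝ (Fin 3)) : EuclideanSpace ℝ (Fin 3) :=
  (WithLp.equiv 2 (Fin 3 → ℝ)).symm
    ![u 1 * v 2 - u 2 * v 1, u 2 * v 0 - u 0 * v 2, u 0 * v 1 - u 1 * v 0]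

section Aux

open Set

abbrev FTV3 := EuclideanSpace ℝ (Fin 3)

lemma ft_inner3 (u v : FTV3) :
    ⟪u, v⟫ = u 0 * v 0 + u 1 * v 1 + u 2 * v 2 := by
  simp [PiLp.inner_apply, Fin.sum_univ_three, RCLike.inner_apply, conj_trivial]; ring

lemma ft_cross3_apply (u v : FTV3) (i : Fin 3) :
    cross3 u v i = ![u 1 * v 2 - u 2 * v 1, u 2 * v 0 - u 0 * v 2, u 0 * v 1 - u 1 * v 0] i := by
  simp [cross3, WithLp.equiv_symm_apply]

lemma ft_inner_cross3_left (u v : FTV3) : ⟪cross3 u v, u⟫ = 0 := by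
  simp [ft_inner3, ft_cross3_apply, Fin.sum_univ_three]; ring

lemma ft_inner_cross3_right (u v : FTV3) : ⟪cross3 u v, v⟫ = 0 := by
  simp [ft_inner3, ft_cross3_apply, Fin.sum_univ_three]; ring

lemma ft_cross3_smul_right (r : ℝ) (u v : FTV3) :
    cross3 u (r • v) = r • cross3 u v := by
  ext i
  fin_cases i <;> simp [ft_cross3_apply, PiLp.smul_apply, smul_eq_mul] <;> ring

lemma ft_inner_cross3_self (u v : FTV3) :
    ⟪cross3 u v, cross3 u v⟫ = ⟪u,u⟫ * ⟪v,v⟫ - ⟪u,v⟫^2 := by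
  rw [ft_inner3, ft_inner3, ft_inner3, ft_inner3]
  simp [ ft_cross3_apply, Fin.sum_univ_three]; ring

lemma ft_inner_cross3 (u v w : FTV3) :
    ⟪cross3 u v, w⟫ = (u 1 * v 2 - u 2 * v 1) * w 0 + (u 2 * v 0 - u 0 * v 2) * w 1
      + (u 0 * v 1 - u 1 * v 0) * w 2 := by
  simp [ft_inner3, ft_cross3_apply, Fin.sum_univ_three]

lemma ft_const_of_hasDerivAt_zero {c d : ℝ} {g : ℝ → ℝ} (hg : ∀ u ∈ Ioo c d, HasDerivAt g 0 u)
    {x y : ℝ} (hx : x ∈ Ioo c d) (hy : y ∈ Ioo c d) : g x = g y := by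
  have key : ∀ p q : ℝ, p ∈ Ioo c d → q ∈ Ioo c d → p ≤ q → g q = g p := by
    intro p q hp hq hpq
    have hsub : Icc p q ⊆ Ioo c d := fun z hz =>
      ⟨lt_of_lt_of_le hp.1 hz.1, lt_of_le_of_lt hz.2 hq.2⟩
    exact constant_of_has_deriv_right_zero
      (fun z hz => (hg z (hsub hz)).continuousAt.continuousWithinAt)
      (fun z hz => (hg z (hsub (Ico_subset_Icc_self hz))).hasDerivWithinAt)
      q ⟨hpq, le_rfl⟩
  rcases le_total x y with h | h
  · exact (key x y hx hy h).symm
  · exact key y x hy hx h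

/-- The Frenet-Serret vector field. -/
noncomputable def ftFrenetField (κ τ : ℝ → ℝ) : ℝ → (FTV3 × FTV3 × FTV3) → (FTV3 × FTV3 × FTV3) :=
  fun t p => (κ t • p.2.1, (-(κ t)) • p.1 + τ t • p.2.2, (-(τ t)) • p.2.1)

lemma ft_frenet_norm_bound {k t' M : ℝ} (hk : |k| ≤ M) (ht : |t'| ≤ M) (w : FTV3 × FTV3 × FTV3) :
    ‖((k • w.2.1, (-k) • w.1 + t' • w.2.2, (-t') • w.2.1) : FTV3 × FTV3 × FTV3)‖ ≤ 2*M*‖w‖ := by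
  have h1 : ‖w.1‖ ≤ ‖w‖ := norm_fst_le w
  have h21 : ‖w.2.1‖ ≤ ‖w‖ := (norm_fst_le w.2).trans (norm_snd_le w)
  have h22 : ‖w.2.2‖ ≤ ‖w‖ := (norm_snd_le w.2).trans (norm_snd_le w)
  have hM : 0 ≤ M := (abs_nonneg k).trans hk
  have hw : 0 ≤ ‖w‖ := norm_nonneg w
  have hMw : 0 ≤ M * ‖w‖ := mul_nonneg hM hw
  rw [Prod.norm_def, Prod.norm_def]
  have e1 : ‖k • w.2.1‖ ≤ M * ‖w‖ := by
    rw [norm_smul, Real.norm_eq_abs]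
    exact mul_le_mul hk h21 (norm_nonneg _) hM
  have e2 : ‖(-k) • w.1 + t' • w.2.2‖ ≤ 2*M*‖w‖ := by
    refine (norm_add_le _ _).trans ?_
    have a1 : ‖(-k) • w.1‖ ≤ M * ‖w‖ := by
      rw [norm_smul, Real.norm_eq_abs, abs_neg]
      exact mul_le_mul hk h1 (norm_nonneg _) hM
    have a2 : ‖t' • w.2.2‖ ≤ M * ‖w‖ := by
      rw [norm_smul, Real.norm_eq_abs]
      exact mul_le_mul ht h22 (norm_nonneg _) hM
    linarith
  have e3 : ‖(-t') • w.2.1‖ ≤ M * ‖w‖ := by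
    rw [norm_smul, Real.norm_eq_abs, abs_neg]
    exact mul_le_mul ht h21 (norm_nonneg _) hM
  refine max_le ?_ (max_le ?_ ?_) <;> dsimp only <;> linarith

/-- The vector field governing the Gram matrix entries of the Frenet frame. -/
noncomputable def ftGramField (κ τ : ℝ → ℝ) : ℝ → (Fin 6 → ℝ) → (Fin 6 → ℝ) :=
  fun t x => ![2*κ t*x 3, -2*κ t*x 3 + 2*τ t*x 5, -2*τ t*x 5,
    κ t*(x 1 - x 0) + τ t*x 4, -(τ t)*x 3 + κ t*x 5, τ t*(x 2 - x 1) - κ t*x 4]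

lemma ft_abs_comb {k1 k2 u1 u2 b1 b2 c1 c2 : ℝ} (h1 : |k1| ≤ b1) (h2 : |k2| ≤ b2)
    (hu1 : |u1| ≤ c1) (hu2 : |u2| ≤ c2) : |k1*u1 + k2*u2| ≤ b1*c1 + b2*c2 := by
  refine (abs_add_le _ _).trans (add_le_add ?_ ?_) <;> rw [abs_mul] <;>
    exact mul_le_mul (by assumption) (by assumption) (abs_nonneg _)
      ((abs_nonneg _).trans (by assumption))

lemma ftGramField_lipschitz {κ τ : ℝ → ℝ} {M : ℝ} (hκ : ∀ t, |κ t| ≤ M) (hτ : ∀ t, |τ t| ≤ M) :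
    ∀ t, LipschitzWith (Real.toNNReal (6*M)) (ftGramField κ τ t) := by
  have hM : 0 ≤ M := (abs_nonneg _).trans (hκ 0)
  intro t
  apply LipschitzWith.of_dist_le_mul
  intro x y
  have hD : 0 ≤ dist x y := dist_nonneg
  have hMD : 0 ≤ M * dist x y := mul_nonneg hM hD
  rw [Real.coe_toNNReal _ (by positivity)]
  rw [dist_pi_le_iff (by positivity)]
  intro i
  have hd : ∀ j, |x j - y j| ≤ dist x y := fun j => by
    rw [← Real.dist_eq]; exact dist_le_pi_dist x y j
  have h2κ : |2*κ t| ≤ 2*M := by rw [abs_mul, abs_two]; nlinarith [hκ t, abs_nonneg (κ t)]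
  have h2κ' : |(-2)*κ t| ≤ 2*M := by
    rw [abs_mul, abs_neg, abs_two]; nlinarith [hκ t, abs_nonneg (κ t)]
  have h2τ : |2*τ t| ≤ 2*M := by rw [abs_mul, abs_two]; nlinarith [hτ t, abs_nonneg (τ t)]
  have h2τ' : |(-2)*τ t| ≤ 2*M := by
    rw [abs_mul, abs_neg, abs_two]; nlinarith [hτ t, abs_nonneg (τ t)]
  have hκ' : |-(κ t)| ≤ M := by rw [abs_neg]; exact hκ t
  have hτ' : |-(τ t)| ≤ M := by rw [abs_neg]; exact hτ t
  have hsub10 : |(x 1 - y 1) - (x 0 - y 0)| ≤ dist x y + dist x y :=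
    (abs_sub _ _).trans (add_le_add (hd 1) (hd 0))
  have hsub21 : |(x 2 - y 2) - (x 1 - y 1)| ≤ dist x y + dist x y :=
    (abs_sub _ _).trans (add_le_add (hd 2) (hd 1))
  fin_cases i <;> rw [Real.dist_eq]
  · show |(2*κ t*x 3) - (2*κ t*y 3)| ≤ 6*M*dist x y
    have e : 2*κ t*x 3 - 2*κ t*y 3 = (2*κ t)*(x 3 - y 3) + 0*0 := by ring
    rw [e]
    refine (ft_abs_comb h2κ (le_refl |(0:ℝ)|) (hd 3) (le_refl _)).trans ?_
    simp; linarith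
  · show |(-2*κ t*x 3 + 2*τ t*x 5) - (-2*κ t*y 3 + 2*τ t*y 5)| ≤ 6*M*dist x y
    have e : (-2*κ t*x 3 + 2*τ t*x 5) - (-2*κ t*y 3 + 2*τ t*y 5)
        = ((-2)*κ t)*(x 3 - y 3) + (2*τ t)*(x 5 - y 5) := by ring
    rw [e]
    refine (ft_abs_comb h2κ' h2τ (hd 3) (hd 5)).trans ?_; linarith
  · show |(-2*τ t*x 5) - (-2*τ t*y 5)| ≤ 6*M*dist x y
    have e : (-2*τ t*x 5) - (-2*τ t*y 5) = ((-2)*τ t)*(x 5 - y 5) + 0*0 := by ring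
    rw [e]
    refine (ft_abs_comb h2τ' (le_refl |(0:ℝ)|) (hd 5) (le_refl _)).trans ?_
    simp; linarith
  · show |(κ t*(x 1 - x 0) + τ t*x 4) - (κ t*(y 1 - y 0) + τ t*y 4)| ≤ 6*M*dist x y
    have e : (κ t*(x 1 - x 0) + τ t*x 4) - (κ t*(y 1 - y 0) + τ t*y 4)
        = (κ t)*((x 1 - y 1) - (x 0 - y 0)) + (τ t)*(x 4 - y 4) := by ring
    rw [e]
    refine (ft_abs_comb (hκ t) (hτ t) hsub10 (hd 4)).trans ?_; nlinarith
  · show |(-(τ t)*x 3 + κ t*x 5) - (-(τ t)*y 3 + κ t*y 5)| ≤ 6*M*dist x y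
    have e : (-(τ t)*x 3 + κ t*x 5) - (-(τ t)*y 3 + κ t*y 5)
        = (-(τ t))*(x 3 - y 3) + (κ t)*(x 5 - y 5) := by ring
    rw [e]
    refine (ft_abs_comb hτ' (hκ t) (hd 3) (hd 5)).trans ?_; linarith
  · show |(τ t*(x 2 - x 1) - κ t*x 4) - (τ t*(y 2 - y 1) - κ t*y 4)| ≤ 6*M*dist x y
    have e : (τ t*(x 2 - x 1) - κ t*x 4) - (τ t*(y 2 - y 1) - κ t*y 4)
        = (τ t)*((x 2 - y 2) - (x 1 - y 1)) + (-(κ t))*(x 4 - y 4) := by ring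
    rw [e]
    refine (ft_abs_comb (hτ t) hκ' hsub21 (hd 4)).trans ?_; nlinarith

end Aux

set_option maxHeartbeats 2000000 in
/-- Fundamental theorem of space curves, existence: given `κ > 0` differentiable and `τ`
continuous on `(a,b)`, there is an open subinterval `J` and a unit-speed curve `α : J → ℝ³`
with curvature `κ` and torsion `τ`. -/
theorem fundamental_theorem_existence
    (a b : ℝ) (hab : a < b) (κ τ : ℝ → ℝ)
    (hκ : ContDiffOn ℝ 1 κ (Set.Ioo a b))
    (hκpos : ∀ s ∈ Set.Ioo a b, 0 < κ s)
    (hτ : ContinuousOn τ (Set.Ioo a b)) :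
    ∃ J : Set ℝ, IsOpen J ∧ J.OrdConnected ∧ J.Nonempty ∧ J ⊆ Set.Ioo a b ∧
      ∃ α : ℝ → EuclideanSpace ℝ (Fin 3), ContDiffOn ℝ 3 α J ∧
        ∀ s ∈ J, ‖deriv α s‖ = 1 ∧ ‖deriv (deriv α) s‖ = κ s ∧
          ⟪cross3 (deriv α s) (deriv (deriv α) s), deriv (deriv (deriv α)) s⟫ /
            ‖cross3 (deriv α s) (deriv (deriv α) s)‖ ^ 2 = τ s := by
  classical
  open Set in
  -- ## Setup of the interval and bounds
  set s₀ : ℝ := (a+b)/2 with hs₀def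
  set δ₀ : ℝ := (b-a)/4 with hδ₀def
  have hδ₀ : 0 < δ₀ := by rw [hδ₀def]; linarith
  have hK₀sub : Icc (s₀-δ₀) (s₀+δ₀) ⊆ Set.Ioo a b := by
    intro x hx
    obtain ⟨h1, h2⟩ := hx
    constructor
    · rw [hs₀def, hδ₀def] at h1; linarith
    · rw [hs₀def, hδ₀def] at h2; linarith
  have hκC : ContinuousOn κ (Icc (s₀-δ₀) (s₀+δ₀)) := hκ.continuousOn.mono hK₀sub
  have hτC : ContinuousOn τ (Icc (s₀-δ₀) (s₀+δ₀)) := hτ.mono hK₀sub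
  obtain ⟨M₁, hM₁⟩ := isCompact_Icc.exists_bound_of_continuousOn hκC
  obtain ⟨M₂, hM₂⟩ := isCompact_Icc.exists_bound_of_continuousOn hτC
  set M : ℝ := max 1 (max M₁ M₂) with hMdef
  have hM1 : (1:ℝ) ≤ M := le_max_left _ _
  have hM0 : (0:ℝ) < M := lt_of_lt_of_le one_pos hM1
  have hκM : ∀ t ∈ Icc (s₀-δ₀) (s₀+δ₀), |κ t| ≤ M := by
    intro t ht
    calc |κ t| = ‖κ t‖ := (Real.norm_eq_abs _).symm
    _ ≤ M₁ := hM₁ t ht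
    _ ≤ M := (le_max_left M₁ M₂).trans (le_max_right _ _)
  have hτM : ∀ t ∈ Icc (s₀-δ₀) (s₀+δ₀), |τ t| ≤ M := by
    intro t ht
    calc |τ t| = ‖τ t‖ := (Real.norm_eq_abs _).symm
    _ ≤ M₂ := hM₂ t ht
    _ ≤ M := (le_max_right M₁ M₂).trans (le_max_right _ _)
  set ε : ℝ := min δ₀ (1/(4*M)) with hεdef
  have hε : 0 < ε := lt_min hδ₀ (by positivity)
  have hεδ : ε ≤ δ₀ := min_le_left _ _
  have hεM : ε ≤ 1/(4*M) := min_le_right _ _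
  set c : ℝ := s₀ - ε with hcdef
  set d : ℝ := s₀ + ε with hddef
  have hcd : c < d := by rw [hcdef, hddef]; linarith
  have hIccK : Icc c d ⊆ Icc (s₀-δ₀) (s₀+δ₀) :=
    Icc_subset_Icc (by rw [hcdef]; linarith) (by rw [hddef]; linarith)
  have hIccIoo : Icc c d ⊆ Set.Ioo a b := fun x hx => hK₀sub (hIccK hx)
  have hJIoo : Ioo c d ⊆ Set.Ioo a b := fun x hx => hIccIoo (Ioo_subset_Icc_self hx)
  have hκM' : ∀ t ∈ Icc c d, |κ t| ≤ M := fun t ht => hκM t (hIccK ht)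
  have hτM' : ∀ t ∈ Icc c d, |τ t| ≤ M := fun t ht => hτM t (hIccK ht)
  have hs₀J : s₀ ∈ Ioo c d := by rw [hcdef, hddef]; constructor <;> simp <;> linarith
  have hκCcd : ContinuousOn κ (Icc c d) := hκC.mono hIccK
  have hτCcd : ContinuousOn τ (Icc c d) := hτC.mono hIccK
  -- ## Picard–Lindelöf for the Frenet system
  set x₀ : FTV3 × FTV3 × FTV3 :=
    (EuclideanSpace.single 0 1, EuclideanSpace.single 1 1, EuclideanSpace.single 2 1) with hx₀def
  have hx₀norm : ‖x₀‖ = 1 := by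
    rw [hx₀def, Prod.norm_def, Prod.norm_def]
    simp [EuclideanSpace.norm_single]
  have hsub_eq : ∀ t (p q : FTV3 × FTV3 × FTV3),
      ftFrenetField κ τ t p - ftFrenetField κ τ t q = ftFrenetField κ τ t (p - q) := by
    intro t p q
    simp only [ftFrenetField, Prod.mk_sub_mk, Prod.fst_sub, Prod.snd_sub]
    refine Prod.ext ?_ (Prod.ext ?_ ?_) <;> simp [smul_sub] <;> abel
  have hfield_bound : ∀ t ∈ Icc c d, ∀ w : FTV3 × FTV3 × FTV3,
      ‖ftFrenetField κ τ t w‖ ≤ 2*M*‖w‖ := fun t ht w =>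
    ft_frenet_norm_bound (hκM' t ht) (hτM' t ht) w
  have hlip : ∀ t ∈ Icc c d,
      LipschitzOnWith (Real.toNNReal (2*M)) (ftFrenetField κ τ t) (Metric.closedBall x₀ 1) := by
    intro t ht
    refine LipschitzWith.lipschitzOnWith ?_
    apply LipschitzWith.of_dist_le_mul
    intro p q
    rw [Real.coe_toNNReal _ (by positivity), dist_eq_norm, dist_eq_norm, hsub_eq t p q]
    exact hfield_bound t ht (p - q)
  have hpl : IsPicardLindelof (ftFrenetField κ τ) (tmin := c) (tmax := d)
      ⟨s₀, Ioo_subset_Icc_self hs₀J⟩ x₀ 1 0 (Real.toNNReal (4*M)) (Real.toNNReal (2*M)) := by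
    refine ⟨by simpa using hlip, ?_, ?_, ?_⟩
    · intro x _
      unfold ftFrenetField
      exact ((hκCcd.smul continuousOn_const).prodMk
        (((hκCcd.neg.smul continuousOn_const).add (hτCcd.smul continuousOn_const)).prodMk
          (hτCcd.neg.smul continuousOn_const)))
    · intro t ht x hx
      rw [Real.coe_toNNReal _ (by positivity)]
      have hxn : ‖x‖ ≤ 2 := by
        have h1 : ‖x‖ ≤ ‖x - x₀‖ + ‖x₀‖ := by
          calc ‖x‖ = ‖x - x₀ + x₀‖ := by rw [sub_add_cancel]
          _ ≤ ‖x - x₀‖ + ‖x₀‖ := norm_add_le _ _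
        rw [hx₀norm] at h1
        have h2 : ‖x - x₀‖ ≤ 1 := by simpa using mem_closedBall_iff_norm.mp hx
        linarith
      calc ‖ftFrenetField κ τ t x‖ ≤ 2*M*‖x‖ := hfield_bound t ht x
      _ ≤ 2*M*2 := by nlinarith
      _ = 4*M := by ring
    · have hmax : max (d - s₀) (s₀ - c) = ε := by rw [hcdef, hddef]; simp
      have key : 4*M*ε ≤ 1 := calc 4*M*ε ≤ 4*M*(1/(4*M)) := by nlinarith
        _ = 1 := by field_simp
      rw [Real.coe_toNNReal _ (by positivity)]
      simpa [hmax] using key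
  obtain ⟨f, hf₀, hfIcc⟩ := hpl.exists_eq_forall_mem_Icc_hasDerivWithinAt₀
  have hfd : ∀ t ∈ Ioo c d, HasDerivAt f (ftFrenetField κ τ t (f t)) t := fun t ht =>
    (hfIcc t (Ioo_subset_Icc_self ht)).hasDerivAt (Icc_mem_nhds ht.1 ht.2)
  -- Frenet frame components
  set T : ℝ → FTV3 := fun t => (f t).1 with hTdef
  set N : ℝ → FTV3 := fun t => (f t).2.1 with hNdef
  set B : ℝ → FTV3 := fun t => (f t).2.2 with hBdef
  have hT' : ∀ t ∈ Ioo c d, HasDerivAt T (κ t • N t) t := by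
    intro t ht
    have h := (ContinuousLinearMap.fst ℝ FTV3 (FTV3 × FTV3)).hasFDerivAt.comp_hasDerivAt t
      (hfd t ht)
    simpa [ftFrenetField, hTdef, hNdef, Function.comp_def] using h
  have hN' : ∀ t ∈ Ioo c d, HasDerivAt N ((-(κ t)) • T t + τ t • B t) t := by
    intro t ht
    have h := (ContinuousLinearMap.fst ℝ FTV3 FTV3).hasFDerivAt.comp_hasDerivAt t
      ((ContinuousLinearMap.snd ℝ FTV3 (FTV3 × FTV3)).hasFDerivAt.comp_hasDerivAt t (hfd t ht))
    simpa [ftFrenetField, hTdef, hNdef, hBdef, Function.comp_def] using h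
  have hB' : ∀ t ∈ Ioo c d, HasDerivAt B ((-(τ t)) • N t) t := by
    intro t ht
    have h := (ContinuousLinearMap.snd ℝ FTV3 FTV3).hasFDerivAt.comp_hasDerivAt t
      ((ContinuousLinearMap.snd ℝ FTV3 (FTV3 × FTV3)).hasFDerivAt.comp_hasDerivAt t (hfd t ht))
    simpa [ftFrenetField, hNdef, hBdef, Function.comp_def] using h
  -- ## Orthonormality of the frame via ODE uniqueness
  set ρ : ℝ → ℝ := fun t => max c (min d t) with hρdef
  have hρmem : ∀ t, ρ t ∈ Icc c d := fun t =>
    ⟨le_max_left _ _, max_le hcd.le (min_le_left _ _)⟩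
  have hρJ : ∀ t ∈ Ioo c d, ρ t = t := by
    intro t ht
    rw [hρdef]
    simp only
    rw [min_eq_right ht.2.le, max_eq_right ht.1.le]
  set κc : ℝ → ℝ := fun t => κ (ρ t) with hκcdef
  set τc : ℝ → ℝ := fun t => τ (ρ t) with hτcdef
  have hκcM : ∀ t, |κc t| ≤ M := fun t => hκM' _ (hρmem t)
  have hτcM : ∀ t, |τc t| ≤ M := fun t => hτM' _ (hρmem t)
  have hκcJ : ∀ t ∈ Ioo c d, κc t = κ t := fun t ht => by rw [hκcdef]; simp [hρJ t ht]
  have hτcJ : ∀ t ∈ Ioo c d, τc t = τ t := fun t ht => by rw [hτcdef]; simp [hρJ t ht]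
  set y : ℝ → (Fin 6 → ℝ) := fun t => ![⟪T t, T t⟫ - 1, ⟪N t, N t⟫ - 1, ⟪B t, B t⟫ - 1,
    ⟪T t, N t⟫, ⟪T t, B t⟫, ⟪N t, B t⟫] with hydef
  have hy' : ∀ t ∈ Ioo c d, HasDerivAt y (ftGramField κc τc t (y t)) t := by
    intro t ht
    have kT := hT' t ht
    have kN := hN' t ht
    have kB := hB' t ht
    rw [hasDerivAt_pi]
    intro i
    have hkJ := hκcJ t ht
    have htJ := hτcJ t ht
    fin_cases i
    · show HasDerivAt (fun s => ⟪T s, T s⟫ - 1) (2*κc t*(⟪T t, N t⟫)) t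
      rw [hkJ]
      have h := (kT.inner ℝ kT).sub_const 1
      refine h.congr_deriv ?_
      simp only [ft_inner3, PiLp.smul_apply, PiLp.add_apply, smul_eq_mul]
      ring
    · show HasDerivAt (fun s => ⟪N s, N s⟫ - 1) (-2*κc t*(⟪T t, N t⟫) + 2*τc t*(⟪N t, B t⟫)) t
      rw [hkJ, htJ]
      have h := (kN.inner ℝ kN).sub_const 1
      refine h.congr_deriv ?_
      simp only [ft_inner3, PiLp.smul_apply, PiLp.add_apply, smul_eq_mul]
      ring
    · show HasDerivAt (fun s => ⟪B s, B s⟫ - 1) (-2*τc t*(⟪N t, B t⟫)) t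
      rw [htJ]
      have h := (kB.inner ℝ kB).sub_const 1
      refine h.congr_deriv ?_
      simp only [ft_inner3, PiLp.smul_apply, PiLp.add_apply, smul_eq_mul]
      ring
    · show HasDerivAt (fun s => ⟪T s, N s⟫)
        (κc t*((⟪N t, N t⟫ - 1) - (⟪T t, T t⟫ - 1)) + τc t*(⟪T t, B t⟫)) t
      rw [hkJ, htJ]
      have h := kT.inner ℝ kN
      refine h.congr_deriv ?_
      simp only [ft_inner3, PiLp.smul_apply, PiLp.add_apply, smul_eq_mul]
      ring
    · show HasDerivAt (fun s => ⟪T s, B s⟫) (-(τc t)*(⟪T t, N t⟫) + κc t*(⟪N t, B t⟫)) t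
      rw [hkJ, htJ]
      have h := kT.inner ℝ kB
      refine h.congr_deriv ?_
      simp only [ft_inner3, PiLp.smul_apply, PiLp.add_apply, smul_eq_mul]
      ring
    · show HasDerivAt (fun s => ⟪N s, B s⟫)
        (τc t*((⟪B t, B t⟫ - 1) - (⟪N t, N t⟫ - 1)) - κc t*(⟪T t, B t⟫)) t
      rw [hkJ, htJ]
      have h := kN.inner ℝ kB
      refine h.congr_deriv ?_
      simp only [ft_inner3, PiLp.smul_apply, PiLp.add_apply, smul_eq_mul]
      ring
  have hy₀ : y s₀ = 0 := by
    have hT₀ : T s₀ = EuclideanSpace.single 0 1 := by rw [hTdef]; simp [hf₀, hx₀def]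
    have hN₀ : N s₀ = EuclideanSpace.single 1 1 := by rw [hNdef]; simp [hf₀, hx₀def]
    have hB₀ : B s₀ = EuclideanSpace.single 2 1 := by rw [hBdef]; simp [hf₀, hx₀def]
    funext i
    fin_cases i
    · show ⟪T s₀, T s₀⟫ - 1 = (0:ℝ)
      rw [hT₀]; simp [ft_inner3, EuclideanSpace.single_apply]
    · show ⟪N s₀, N s₀⟫ - 1 = (0:ℝ)
      rw [hN₀]; simp [ft_inner3, EuclideanSpace.single_apply]
    · show ⟪B s₀, B s₀⟫ - 1 = (0:ℝ)
      rw [hB₀]; simp [ft_inner3, EuclideanSpace.single_apply]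
    · show ⟪T s₀, N s₀⟫ = (0:ℝ)
      rw [hT₀, hN₀]; simp [ft_inner3, EuclideanSpace.single_apply]
    · show ⟪T s₀, B s₀⟫ = (0:ℝ)
      rw [hT₀, hB₀]; simp [ft_inner3, EuclideanSpace.single_apply]
    · show ⟪N s₀, B s₀⟫ = (0:ℝ)
      rw [hN₀, hB₀]; simp [ft_inner3, EuclideanSpace.single_apply]
  have hzero_field : ∀ t, ftGramField κc τc t (0 : Fin 6 → ℝ) = 0 := by
    intro t
    funext i
    fin_cases i
    · show 2*κc t*(0:ℝ) = (0:ℝ); ring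
    · show -2*κc t*(0:ℝ) + 2*τc t*(0:ℝ) = (0:ℝ); ring
    · show -2*τc t*(0:ℝ) = (0:ℝ); ring
    · show κc t*((0:ℝ) - (0:ℝ)) + τc t*(0:ℝ) = (0:ℝ); ring
    · show -(τc t)*(0:ℝ) + κc t*(0:ℝ) = (0:ℝ); ring
    · show τc t*((0:ℝ) - (0:ℝ)) - κc t*(0:ℝ) = (0:ℝ); ring
  have hEq : Set.EqOn y (fun _ => (0 : Fin 6 → ℝ)) (Ioo c d) := by
    refine ODE_solution_unique_of_mem_Ioo (s := fun _ => Set.univ)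
      (fun t _ => (ftGramField_lipschitz hκcM hτcM t).lipschitzOnWith) hs₀J
      (fun t ht => ⟨hy' t ht, trivial⟩) (fun t ht => ⟨?_, trivial⟩) (by simp [hy₀])
    rw [hzero_field t]
    exact hasDerivAt_const t 0
  -- Extract the six orthonormality relations
  have horth : ∀ s ∈ Ioo c d, ⟪T s, T s⟫ = 1 ∧ ⟪N s, N s⟫ = 1 ∧ ⟪B s, B s⟫ = 1 ∧
      ⟪T s, N s⟫ = 0 ∧ ⟪T s, B s⟫ = 0 ∧ ⟪N s, B s⟫ = 0 := by
    intro s hs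
    have h := hEq hs
    have h0 : ⟪T s, T s⟫ - 1 = (0:ℝ) := congrFun h 0
    have h1 : ⟪N s, N s⟫ - 1 = (0:ℝ) := congrFun h 1
    have h2 : ⟪B s, B s⟫ - 1 = (0:ℝ) := congrFun h 2
    have h3 : ⟪T s, N s⟫ = (0:ℝ) := congrFun h 3
    have h4 : ⟪T s, B s⟫ = (0:ℝ) := congrFun h 4
    have h5 : ⟪N s, B s⟫ = (0:ℝ) := congrFun h 5
    exact ⟨by linarith, by linarith, by linarith, h3, h4, h5⟩
  -- ## The determinant is constantly 1
  set dd : ℝ → ℝ := fun t => (T t 1 * N t 2 - T t 2 * N t 1) * B t 0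
    + (T t 2 * N t 0 - T t 0 * N t 2) * B t 1 + (T t 0 * N t 1 - T t 1 * N t 0) * B t 2
    with hdddef
  have hcomp : ∀ t ∈ Ioo c d, ∀ i : Fin 3,
      HasDerivAt (fun s => T s i) (κ t * N t i) t ∧
      HasDerivAt (fun s => N s i) ((-(κ t)) * T t i + τ t * B t i) t ∧
      HasDerivAt (fun s => B s i) ((-(τ t)) * N t i) t := by
    intro t ht i
    refine ⟨?_, ?_, ?_⟩
    · have h := (EuclideanSpace.proj (𝕜 := ℝ) i).hasFDerivAt.comp_hasDerivAt t (hT' t ht)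
      simpa [PiLp.smul_apply, smul_eq_mul, Function.comp_def] using h
    · have h := (EuclideanSpace.proj (𝕜 := ℝ) i).hasFDerivAt.comp_hasDerivAt t (hN' t ht)
      simpa [PiLp.add_apply, PiLp.smul_apply, smul_eq_mul, Function.comp_def] using h
    · have h := (EuclideanSpace.proj (𝕜 := ℝ) i).hasFDerivAt.comp_hasDerivAt t (hB' t ht)
      simpa [PiLp.smul_apply, smul_eq_mul, Function.comp_def] using h
  have hdd' : ∀ t ∈ Ioo c d, HasDerivAt dd 0 t := by
    intro t ht
    obtain ⟨hTc0, hNc0, hBc0⟩ := hcomp t ht 0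
    obtain ⟨hTc1, hNc1, hBc1⟩ := hcomp t ht 1
    obtain ⟨hTc2, hNc2, hBc2⟩ := hcomp t ht 2
    have H := ((((hTc1.mul hNc2).sub (hTc2.mul hNc1)).mul hBc0).add
      (((hTc2.mul hNc0).sub (hTc0.mul hNc2)).mul hBc1)).add
      (((hTc0.mul hNc1).sub (hTc1.mul hNc0)).mul hBc2)
    rw [hdddef]
    refine H.congr_deriv ?_
    simp only [Pi.mul_apply, Pi.sub_apply]
    ring
  have hdd1 : ∀ s ∈ Ioo c d, dd s = 1 := by
    have hdd₀ : dd s₀ = 1 := by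
      have hT₀ : T s₀ = EuclideanSpace.single 0 1 := by rw [hTdef]; simp [hf₀, hx₀def]
      have hN₀ : N s₀ = EuclideanSpace.single 1 1 := by rw [hNdef]; simp [hf₀, hx₀def]
      have hB₀ : B s₀ = EuclideanSpace.single 2 1 := by rw [hBdef]; simp [hf₀, hx₀def]
      rw [hdddef]
      simp [hT₀, hN₀, hB₀, EuclideanSpace.single_apply]
    intro s hs
    rw [← hdd₀]
    exact ft_const_of_hasDerivAt_zero hdd' hs hs₀J
  -- ## The curve α
  set α : ℝ → FTV3 := fun t => ∫ u in s₀..t, T u with hαdef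
  have hTcont : ContinuousOn T (Ioo c d) := fun s hs =>
    (hT' s hs).continuousAt.continuousWithinAt
  have hNcont : ContinuousOn N (Ioo c d) := fun s hs =>
    (hN' s hs).continuousAt.continuousWithinAt
  have hBcont : ContinuousOn B (Ioo c d) := fun s hs =>
    (hB' s hs).continuousAt.continuousWithinAt
  have hα' : ∀ s ∈ Ioo c d, HasDerivAt α (T s) s := by
    intro s hs
    have huIcc : uIcc s₀ s ⊆ Ioo c d :=
      (Set.ordConnected_Ioo).uIcc_subset hs₀J hs
    exact intervalIntegral.integral_hasDerivAt_right
      ((hTcont.mono huIcc).intervalIntegrable)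
      (hTcont.stronglyMeasurableAtFilter isOpen_Ioo s hs)
      (hT' s hs).continuousAt
  -- derivative identities on J
  have hd1 : ∀ s ∈ Ioo c d, deriv α s = T s := fun s hs => (hα' s hs).deriv
  have hd2 : ∀ s ∈ Ioo c d, deriv (deriv α) s = κ s • N s := by
    intro s hs
    have hev : deriv α =ᶠ[nhds s] T :=
      Filter.eventuallyEq_of_mem (isOpen_Ioo.mem_nhds hs) hd1
    rw [hev.deriv_eq]
    exact (hT' s hs).deriv
  have hκdiff : ∀ s ∈ Ioo c d, HasDerivAt κ (deriv κ s) s := fun s hs =>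
    ((hκ.differentiableOn one_ne_zero).differentiableAt
      (isOpen_Ioo.mem_nhds (hJIoo hs))).hasDerivAt
  have hd3 : ∀ s ∈ Ioo c d, deriv (deriv (deriv α)) s
      = κ s • ((-(κ s)) • T s + τ s • B s) + deriv κ s • N s := by
    intro s hs
    have hev : deriv (deriv α) =ᶠ[nhds s] (fun u => κ u • N u) :=
      Filter.eventuallyEq_of_mem (isOpen_Ioo.mem_nhds hs) hd2
    rw [hev.deriv_eq]
    exact ((hκdiff s hs).smul (hN' s hs)).deriv
  -- ## Smoothness of α
  have hTd : DifferentiableOn ℝ T (Ioo c d) := fun s hs =>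
    (hT' s hs).differentiableAt.differentiableWithinAt
  have hNd : DifferentiableOn ℝ N (Ioo c d) := fun s hs =>
    (hN' s hs).differentiableAt.differentiableWithinAt
  have hBd : DifferentiableOn ℝ B (Ioo c d) := fun s hs =>
    (hB' s hs).differentiableAt.differentiableWithinAt
  have hαdiff : DifferentiableOn ℝ α (Ioo c d) := fun s hs =>
    (hα' s hs).differentiableAt.differentiableWithinAt
  have hκJ1 : ContDiffOn ℝ 1 κ (Ioo c d) := hκ.mono hJIoo
  have hτJc : ContinuousOn τ (Ioo c d) := hτ.mono hJIoo
  have hκJc : ContinuousOn κ (Ioo c d) := hκJ1.continuousOn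
  have hB1 : ContDiffOn ℝ 1 B (Ioo c d) := by
    rw [show (1 : WithTop ℕ∞) = 0 + 1 by norm_num,
      contDiffOn_succ_iff_deriv_of_isOpen isOpen_Ioo]
    refine ⟨hBd, by simp, ?_⟩
    rw [contDiffOn_zero]
    exact ContinuousOn.congr (hτJc.neg.smul hNcont) (fun s hs => (hB' s hs).deriv)
  have hN1 : ContDiffOn ℝ 1 N (Ioo c d) := by
    rw [show (1 : WithTop ℕ∞) = 0 + 1 by norm_num,
      contDiffOn_succ_iff_deriv_of_isOpen isOpen_Ioo]
    refine ⟨hNd, by simp, ?_⟩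
    rw [contDiffOn_zero]
    exact ContinuousOn.congr ((hκJc.neg.smul hTcont).add (hτJc.smul hBcont))
      (fun s hs => (hN' s hs).deriv)
  have hT2 : ContDiffOn ℝ 2 T (Ioo c d) := by
    rw [show (2 : WithTop ℕ∞) = 1 + 1 by norm_num,
      contDiffOn_succ_iff_deriv_of_isOpen isOpen_Ioo]
    refine ⟨hTd, by simp, ?_⟩
    exact ContDiffOn.congr (hκJ1.smul hN1) (fun s hs => (hT' s hs).deriv)
  have hα3 : ContDiffOn ℝ 3 α (Ioo c d) := by
    rw [show (3 : WithTop ℕ∞) = 2 + 1 by norm_num,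
      contDiffOn_succ_iff_deriv_of_isOpen isOpen_Ioo]
    refine ⟨hαdiff, by simp, ?_⟩
    exact ContDiffOn.congr hT2 hd1
  -- ## Conclusion
  refine ⟨Ioo c d, isOpen_Ioo, Set.ordConnected_Ioo, ⟨s₀, hs₀J⟩, hJIoo, α, hα3, ?_⟩
  intro s hs
  obtain ⟨hTT, hNN, hBB, hTN, hTB, hNB⟩ := horth s hs
  have hk : 0 < κ s := hκpos s (hJIoo hs)
  have hTnorm : ‖T s‖ = 1 := by
    have h := real_inner_self_eq_norm_sq (T s)
    nlinarith [norm_nonneg (T s)]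
  have hNnorm : ‖N s‖ = 1 := by
    have h := real_inner_self_eq_norm_sq (N s)
    nlinarith [norm_nonneg (N s)]
  refine ⟨by rw [hd1 s hs, hTnorm], ?_, ?_⟩
  · rw [hd2 s hs, norm_smul, Real.norm_eq_abs, abs_of_pos hk, hNnorm, mul_one]
  · rw [hd1 s hs, hd2 s hs, hd3 s hs]
    have hcb : ⟪cross3 (T s) (N s), B s⟫ = 1 := by
      rw [ft_inner_cross3]
      have hds := hdd1 s hs
      rw [hdddef] at hds
      simp only at hds
      linarith [hds]
    have hcu : ⟪cross3 (T s) (N s), T s⟫ = 0 := ft_inner_cross3_left _ _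
    have hcn : ⟪cross3 (T s) (N s), N s⟫ = 0 := ft_inner_cross3_right _ _
    have hcc : ⟪cross3 (T s) (N s), cross3 (T s) (N s)⟫ = 1 := by
      rw [ft_inner_cross3_self, hTT, hNN, hTN]; ring
    rw [ft_cross3_smul_right]
    have hnum : ⟪κ s • cross3 (T s) (N s),
        κ s • ((-(κ s)) • T s + τ s • B s) + deriv κ s • N s⟫ = κ s ^ 2 * τ s := by
      simp only [inner_add_right, real_inner_smul_left, real_inner_smul_right, hcu, hcn, hcb]
      ring
    have hden : ‖κ s • cross3 (T s) (N s)‖ ^ 2 = κ s ^ 2 := by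
      rw [← real_inner_self_eq_norm_sq]
      simp only [real_inner_smul_left, real_inner_smul_right, hcc]
      ring
    rw [hnum, hden]
    field_simp
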